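/- Let (w_n) satisfy w_{n+2} = p·w_{n+1} + q·w_n over ℚ with w_0 = a, w_1 = b, and for 1 ≤ d ≤ k−1 define A_{k,d}(x) = ∑_{n≥0} w_n^{k−d} w_{n+1}^d x^{n+1} as a formal power series. Then A_{k,d}(x) − a^{k−d} b^d x = p^d x (H_k(x) − a^k) + x ∑_{j=1}^d C(d,j) p^{d−j} q^j A_{k,k−j}(x), where H_k(x) = ∑_{n≥0} w_n^k x^n. -/

import Mathlib

open PowerSeries

lemma key_alg (p q u v : ℚ) (k d : ℕ) (hd1 : 1 ≤ d) (hdk : d ≤ k - 1) :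
    v ^ (k - d) * (p * v + q * u) ^ d
      = p ^ d * v ^ k + ∑ j ∈ Finset.Icc 1 d,
          (d.choose j : ℚ) * p ^ (d - j) * q ^ j * (u ^ j * v ^ (k - j)) := by
  have hdk' : d ≤ k := le_trans hdk (Nat.sub_le k 1)
  rw [add_comm (p * v), add_pow, Finset.mul_sum, Finset.sum_range_succ',
    ← Finset.Ico_add_one_right_eq_Icc, Finset.sum_Ico_eq_sum_range]
  simp only [Nat.add_sub_cancel, pow_zero, one_mul, Nat.sub_zero, Nat.choose_zero_right,
    Nat.cast_one, mul_one]
  rw [add_comm (∑ _k ∈ Finset.range d, _)]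
  congr 1
  · have h2 : v ^ (k - d) * v ^ d = v ^ k := by
      rw [← pow_add]; congr 1; omega
    rw [mul_pow, ← h2]; ring
  · apply Finset.sum_congr rfl
    intro i hi
    have hi' : i + 1 ≤ d := Nat.succ_le_of_lt (Finset.mem_range.mp hi)
    have h1 : k - d + (d - (i + 1)) = k - (i + 1) := by omega
    rw [show 1 + i = i + 1 from Nat.add_comm 1 i, mul_pow, mul_pow, ← h1, pow_add]
    ring

theorem horadam_A_relation (p q a b : ℚ) (w : ℕ → ℚ)
    (h0 : w 0 = a) (h1 : w 1 = b)
    (hrec : ∀ n, w (n + 2) = p * w (n + 1) + q * w n)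
    (k d : ℕ) (hd1 : 1 ≤ d) (hdk : d ≤ k - 1)
    (A : ℕ → PowerSeries ℚ)
    (hA : ∀ e, A e = X * PowerSeries.mk (fun n => w n ^ (k - e) * w (n + 1) ^ e))
    (H : PowerSeries ℚ) (hH : H = PowerSeries.mk (fun n => w n ^ k)) :
    A d - C (R := ℚ) (a ^ (k - d) * b ^ d) * X
      = C (R := ℚ) (p ^ d) * X * (H - C (R := ℚ) (a ^ k))
        + X * ∑ j ∈ Finset.Icc 1 d,
            C (R := ℚ) ((d.choose j : ℚ) * p ^ (d - j) * q ^ j) * A (k - j) := by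
  have hdk' : d ≤ k := le_trans hdk (Nat.sub_le k 1)
  have hk2 : 2 ≤ k := by omega
  subst hH
  simp only [hA]
  ext n
  simp only [map_sub, map_add, mul_assoc, PowerSeries.coeff_C_mul, map_sum, coeff_mk,
    PowerSeries.coeff_C, PowerSeries.coeff_X]
  match n with
  | 0 =>
    simp [PowerSeries.coeff_zero_eq_constantCoeff]
  | 1 =>
    simp only [PowerSeries.coeff_succ_X_mul, coeff_mk, if_neg one_ne_zero, if_pos rfl,
      PowerSeries.coeff_one, sub_self, mul_zero, h0, h1]
    rw [PowerSeries.coeff_zero_eq_constantCoeff]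
    simp [h0, sub_self]
  | (n + 2) =>
    simp only [show n + 2 = (n + 1) + 1 from rfl, PowerSeries.coeff_succ_X_mul, coeff_mk,
      map_sub, map_sum, PowerSeries.coeff_C_mul, PowerSeries.coeff_C]
    have hc : ∀ j ∈ Finset.Icc 1 d,
        (d.choose j : ℚ) * (p ^ (d - j) * q ^ j) * (w n ^ (k - (k - j)) * w (n + 1) ^ (k - j))
        = (d.choose j : ℚ) * p ^ (d - j) * q ^ j * (w n ^ j * w (n + 1) ^ (k - j)) := by
      intro j hj
      obtain ⟨hj1, hjd⟩ := Finset.mem_Icc.mp hj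
      rw [Nat.sub_sub_self (le_trans hjd hdk')]
      ring
    rw [Finset.sum_congr rfl hc]
    have hne1 : ¬ (n + 1 + 1 = 1) := by omega
    have hne0 : ¬ (n + 1 = 0) := by omega
    simp only [if_neg hne1, if_neg hne0, sub_zero, mul_zero, sub_zero]
    rw [show w (n + 1 + 1) = p * w (n + 1) + q * w n from hrec n,
      key_alg p q (w n) (w (n + 1)) k d hd1 hdk]
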